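/- Let C be a category such that for every object X the countably infinite coproduct ∐_ℕ X exists in C, and let F : Cᵒᵖ → Ab be a contravariant functor such that for every object X the structure morphisms X → ∐_ℕ X of the summands induce an isomorphism φ_X : F(∐_ℕ X) → ∏_ℕ F(X). Then every finite homogeneous functorial semi-norm on F is trivial: for every object X and every α ∈ F(X) one has |α| = 0. -/

import Mathlib

open CategoryTheory CategoryTheory.Limits

universe u v

/-- A finite functorial semi-norm on a contravariant functor `F : Cᵒᵖ ⥤ Ab`. -/
structure ContraFunctorialSeminorm {C : Type u} [Category.{v} C]
    (F : Cᵒᵖ ⥤ AddCommGrpCat.{v}) where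
  ν : ∀ X : C, F.obj (Opposite.op X) → ℝ
  nonneg : ∀ (X : C) (x : F.obj (Opposite.op X)), 0 ≤ ν X x
  map_zero : ∀ X : C, ν X 0 = 0
  map_neg : ∀ (X : C) (x : F.obj (Opposite.op X)), ν X (-x) = ν X x
  add_le : ∀ (X : C) (x y : F.obj (Opposite.op X)), ν X (x + y) ≤ ν X x + ν X y
  functorial : ∀ {Y X : C} (f : Y ⟶ X) (x : F.obj (Opposite.op X)),
    ν Y (F.map f.op x) ≤ ν X x

/-- Homogeneity of a functorial semi-norm. -/
def ContraFunctorialSeminorm.Homogeneous {C : Type u} [Category.{v} C]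
    {F : Cᵒᵖ ⥤ AddCommGrpCat.{v}} (N : ContraFunctorialSeminorm F) : Prop :=
  ∀ (X : C) (n : ℤ), n ≠ 0 → ∀ x : F.obj (Opposite.op X),
    N.ν X (n • x) = |(n : ℝ)| * N.ν X x

/-- If `C` has countably infinite coproducts `∐_ℕ X` and the contravariant functor
`F : Cᵒᵖ ⥤ Ab` takes them to products (via the structure morphisms), then every
finite homogeneous functorial semi-norm on `F` is trivial. -/
theorem seminorm_trivial_of_countably_additive {C : Type u} [Category.{v} C]
    [∀ X : C, HasCoproduct (fun _ : ℕ => X)]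
    (F : Cᵒᵖ ⥤ AddCommGrpCat.{v})
    (hφ : ∀ X : C, Function.Bijective
      (fun (γ : F.obj (Opposite.op (∐ fun _ : ℕ => X))) =>
        fun d : ℕ => F.map (Sigma.ι (fun _ : ℕ => X) d).op γ))
    (N : ContraFunctorialSeminorm F) (hN : N.Homogeneous) :
    ∀ (X : C) (α : F.obj (Opposite.op X)), N.ν X α = 0 := by
  intro X α
  obtain ⟨γ, hγ⟩ := (hφ X).surjective (fun d : ℕ => ((2 : ℤ) ^ d) • α)
  have key : ∀ d : ℕ, ((2 : ℝ) ^ d) * N.ν X α ≤ N.ν (∐ fun _ : ℕ => X) γ := by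
    intro d
    have h1 : F.map (Sigma.ι (fun _ : ℕ => X) d).op γ = ((2 : ℤ) ^ d) • α :=
      congrFun hγ d
    have h2 := N.functorial (Sigma.ι (fun _ : ℕ => X) d) γ
    rw [h1] at h2
    have h3 := hN X ((2 : ℤ) ^ d) (by positivity) α
    rw [h3] at h2
    calc ((2 : ℝ) ^ d) * N.ν X α = |((((2:ℤ)^d : ℤ)) : ℝ)| * N.ν X α := by
          push_cast; rw [abs_of_nonneg (by positivity)]
      _ ≤ N.ν (∐ fun _ : ℕ => X) γ := h2
  by_contra hne
  have hpos : 0 < N.ν X α := lt_of_le_of_ne (N.nonneg X α) (Ne.symm hne)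
  obtain ⟨d, hd⟩ := pow_unbounded_of_one_lt
    (N.ν (∐ fun _ : ℕ => X) γ / N.ν X α) (by norm_num : (1:ℝ) < 2)
  have := key d
  rw [div_lt_iff₀ hpos] at hd
  linarith
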